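/- In the translated instance, every auxiliary man is matched: let I be an SMTI-1TM instance and I' its translated SMI instance. In every stable matching M' of I', each man b_j is matched (to s_j or to t_j); consequently, for each j at most one of the women s_j, t_j can be matched in M' to a man of the form a_i. -/

import Mathlib

/-- An instance of the stable marriage problem with ties and incomplete lists (SMTI),
with men of type `α` and women of type `β`.  Each person's preference list is
represented by a rank function: `mpref m w = none` means woman `w` is unacceptable
to man `m`, and `mpref m w = some r` means `w` is acceptable with rank `r`
(smaller rank = more preferred; equal ranks = a tie).  This encodes exactly a
total preorder on the set of acceptable partners. -/
structure SMInst (α β : Type) where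
  mpref : α → β → Option ℕ
  wpref : β → α → Option ℕ

namespace SMInst

variable {α β : Type}

/-- Woman `w` is acceptable to man `m`. -/
def mAcc (I : SMInst α β) (m : α) (w : β) : Prop := (I.mpref m w).isSome

/-- Man `m` is acceptable to woman `w`. -/
def wAcc (I : SMInst α β) (w : β) (m : α) : Prop := (I.wpref w m).isSome

/-- Man `m` strictly prefers woman `w` to woman `w'`. -/
def mPref (I : SMInst α β) (m : α) (w w' : β) : Prop :=
  ∃ r r', I.mpref m w = some r ∧ I.mpref m w' = some r' ∧ r < r'

/-- Woman `w` strictly prefers man `m` to man `m'`. -/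
def wPref (I : SMInst α β) (w : β) (m m' : α) : Prop :=
  ∃ r r', I.wpref w m = some r ∧ I.wpref w m' = some r' ∧ r < r'

/-- `M` is a matching of `I`: all pairs mutually acceptable and no person in two pairs. -/
def IsMatching (I : SMInst α β) (M : Finset (α × β)) : Prop :=
  (∀ p ∈ M, I.mAcc p.1 p.2 ∧ I.wAcc p.2 p.1) ∧
  (∀ p ∈ M, ∀ q ∈ M, p.1 = q.1 → p = q) ∧
  (∀ p ∈ M, ∀ q ∈ M, p.2 = q.2 → p = q)

/-- Man `m` is single (unmatched) in `M`. -/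
def mSingle (M : Finset (α × β)) (m : α) : Prop := ∀ w, (m, w) ∉ M

/-- Woman `w` is single (unmatched) in `M`. -/
def wSingle (M : Finset (α × β)) (w : β) : Prop := ∀ m, (m, w) ∉ M

/-- `(m, w)` blocks `M` in instance `I`. -/
def Blocks (I : SMInst α β) (M : Finset (α × β)) (m : α) (w : β) : Prop :=
  I.mAcc m w ∧ I.wAcc w m ∧
  (mSingle M m ∨ ∃ w', (m, w') ∈ M ∧ I.mPref m w w') ∧
  (wSingle M w ∨ ∃ m', (m', w) ∈ M ∧ I.wPref w m m')

/-- `M` is a (weakly) stable matching of `I`. -/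
def IsStable (I : SMInst α β) (M : Finset (α × β)) : Prop :=
  I.IsMatching M ∧ ∀ m w, ¬ I.Blocks M m w

/-- Man `m` prefers matching `M'` to matching `M`, with respect to his list in `I`:
he is matched in `M'` to an acceptable partner, and he is either single in `M`
or strictly prefers his `M'`-partner to his `M`-partner. -/
def mPrefMatching (I : SMInst α β) (m : α) (M' M : Finset (α × β)) : Prop :=
  ∃ w, (m, w) ∈ M' ∧ I.mAcc m w ∧
    (mSingle M m ∨ ∃ w', (m, w') ∈ M ∧ I.mPref m w w')

/-- Woman `w` prefers matching `M'` to matching `M`, with respect to her list in `I`. -/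
def wPrefMatching (I : SMInst α β) (w : β) (M' M : Finset (α × β)) : Prop :=
  ∃ m, (m, w) ∈ M' ∧ I.wAcc w m ∧
    (wSingle M w ∨ ∃ m', (m', w) ∈ M ∧ I.wPref w m m')

/-- `I` and `I'` differ only in man `m`'s preference list. -/
def mDiffOnly (I I' : SMInst α β) (m : α) : Prop :=
  I.wpref = I'.wpref ∧ ∀ m', m' ≠ m → I.mpref m' = I'.mpref m'

/-- `I` and `I'` differ only in woman `w`'s preference list. -/
def wDiffOnly (I I' : SMInst α β) (w : β) : Prop :=
  I.mpref = I'.mpref ∧ ∀ w', w' ≠ w → I.wpref w' = I'.wpref w'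

/-- Men's lists contain no ties. -/
def MStrict (I : SMInst α β) : Prop :=
  ∀ m w w', I.mpref m w = I.mpref m w' → I.mAcc m w → w = w'

/-- Women's lists contain no ties. -/
def WStrict (I : SMInst α β) : Prop :=
  ∀ w m m', I.wpref w m = I.wpref w m' → I.wAcc w m → m = m'

/-- `I` is an SMI instance: no ties at all (all lists strictly ordered). -/
def NoTies (I : SMInst α β) : Prop := I.MStrict ∧ I.WStrict

/-- `I` is an SMTI-1TM instance: ties may occur only in men's lists,
i.e. women's lists are strictly ordered. -/
def OneTM (I : SMInst α β) : Prop := I.WStrict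

/-- `I'` is obtained from `I` by breaking ties: same acceptable sets, and every
strict preference of `I` is preserved in `I'` (so each person's list in `I'` is a
linear extension of the corresponding total preorder in `I`). -/
def Refines (I I' : SMInst α β) : Prop :=
  (∀ m w, I.mAcc m w ↔ I'.mAcc m w) ∧
  (∀ w m, I.wAcc w m ↔ I'.wAcc w m) ∧
  (∀ m w w', I.mPref m w w' → I'.mPref m w w') ∧
  (∀ w m m', I.wPref w m m' → I'.wPref w m m')

end SMInst

namespace SMInst

/-- The translation of an SMTI-1TM instance `I` (with men/women indexed by `Fin n`)
into an SMI instance `I'`.  Men of `I'`: `Sum.inl i` is `a_i`, `Sum.inr j` is `b_j`.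
Women of `I'`: `Sum.inl j` is `s_j`, `Sum.inr j` is `t_j`.
The strict list of `a_i` replaces each tie `(w_{j_1} … w_{j_k})` (indices increasing)
of `m_i`'s list by the strict segment `t_{j_1} … t_{j_k} s_{j_1} … s_{j_k}`;
`b_j`'s list is `s_j t_j`; `s_j`'s list is `Q(w_j)` followed by `b_j`; and
`t_j`'s list is `b_j` followed by `Q(w_j)`, where `Q(w_j)` is `w_j`'s list with
each `m_i` replaced by `a_i`. -/
def translate {n : ℕ} (I : SMInst (Fin n) (Fin n)) :
    SMInst (Fin n ⊕ Fin n) (Fin n ⊕ Fin n) where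
  mpref := fun a w =>
    match a, w with
    | Sum.inl i, Sum.inl j =>
        (I.mpref i j).map fun r =>
          2 * n * r + n +
            (Finset.univ.filter fun j' : Fin n => I.mpref i j' = some r ∧ j' < j).card
    | Sum.inl i, Sum.inr j =>
        (I.mpref i j).map fun r =>
          2 * n * r +
            (Finset.univ.filter fun j' : Fin n => I.mpref i j' = some r ∧ j' < j).card
    | Sum.inr i, Sum.inl j => if j = i then some 0 else none
    | Sum.inr i, Sum.inr j => if j = i then some 1 else none
  wpref := fun w a =>
    match w, a with
    | Sum.inl j, Sum.inl i => I.wpref j i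
    | Sum.inl j, Sum.inr i =>
        if i = j then some ((Finset.univ.sup fun i' : Fin n => (I.wpref j i').getD 0) + 1)
        else none
    | Sum.inr j, Sum.inl i => (I.wpref j i).map (· + 1)
    | Sum.inr j, Sum.inr i => if i = j then some 0 else none

/-- The projection of a matching `M'` of the translated instance back to the
original instance: `M = {(m_i, w_j) : (a_i, s_j) ∈ M' ∨ (a_i, t_j) ∈ M'}`. -/
def projectM {n : ℕ} (M' : Finset ((Fin n ⊕ Fin n) × (Fin n ⊕ Fin n))) :
    Finset (Fin n × Fin n) :=
  Finset.univ.filter fun p =>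
    (Sum.inl p.1, Sum.inl p.2) ∈ M' ∨ (Sum.inl p.1, Sum.inr p.2) ∈ M'

end SMInst

/-- In every stable matching `M'` of the translated instance `I'`, each auxiliary man
`b_j` is matched (to `s_j` or `t_j`); consequently, for each `j` at most one of the
women `s_j`, `t_j` is matched in `M'` to a man of the form `a_i`. -/
theorem translated_auxiliary_men_matched {n : ℕ}
    (I : SMInst (Fin n) (Fin n)) (h1tm : I.OneTM)
    (M' : Finset ((Fin n ⊕ Fin n) × (Fin n ⊕ Fin n)))
    (hM' : (SMInst.translate I).IsStable M') (j : Fin n) :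
    ((Sum.inr j, Sum.inl j) ∈ M' ∨ (Sum.inr j, Sum.inr j) ∈ M') ∧
    ¬ ∃ i i' : Fin n, (Sum.inl i, Sum.inl j) ∈ M' ∧ (Sum.inl i', Sum.inr j) ∈ M' := by
  obtain ⟨⟨hacc, hm1, hw1⟩, hstab⟩ := hM'
  have hb : (Sum.inr j, Sum.inl j) ∈ M' ∨ (Sum.inr j, Sum.inr j) ∈ M' := by
    by_contra hcon
    push_neg at hcon
    have hsingle : SMInst.mSingle M' (Sum.inr j : Fin n ⊕ Fin n) := by
      intro w hw
      have h := (hacc _ hw).1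
      simp only [SMInst.mAcc, SMInst.translate] at h
      rcases w with k | k
      · by_cases hk : k = j
        · subst hk; exact hcon.1 hw
        · simp [hk] at h
      · by_cases hk : k = j
        · subst hk; exact hcon.2 hw
        · simp [hk] at h
    apply hstab (Sum.inr j) (Sum.inr j)
    refine ⟨?_, ?_, Or.inl hsingle, ?_⟩
    · simp [SMInst.mAcc, SMInst.translate]
    · simp [SMInst.wAcc, SMInst.translate]
    · by_cases hts : SMInst.wSingle M' (Sum.inr j : Fin n ⊕ Fin n)
      · exact Or.inl hts
      · right
        simp only [SMInst.wSingle, not_forall, not_not] at hts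
        obtain ⟨m', hm'⟩ := hts
        refine ⟨m', hm', ?_⟩
        rcases m' with i | i
        · have h := (hacc _ hm').2
          simp only [SMInst.wAcc, SMInst.translate, Option.isSome_map] at h
          obtain ⟨r, hr⟩ := Option.isSome_iff_exists.mp h
          exact ⟨0, r + 1, by simp [SMInst.translate],
            by simp [SMInst.translate, hr], Nat.succ_pos r⟩
        · have h := (hacc _ hm').2
          simp only [SMInst.wAcc, SMInst.translate] at h
          by_cases hk : i = j
          · subst hk; exact absurd hm' (hsingle _)
          · simp [hk] at h
  refine ⟨hb, ?_⟩
  rintro ⟨i, i', hs, ht⟩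
  rcases hb with hbm | hbm
  · have := hw1 _ hs _ hbm rfl
    simp at this
  · have := hw1 _ ht _ hbm rfl
    simp at this
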